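/- arXiv:1402.1230 — 2 statements merged into one kernel-verified Lean document; each statement's English description precedes it below -/
import Mathlib

section
/- With F(z,t) the multivariate generating function for walks in ℕ^d from the origin with highly symmetric step set S, and G the group of the 2^d sign-inversion substitutions σ: z_k ↦ z_k^{ε_k}, the orbit sum identity holds: ∑_{σ ∈ G} sgn(σ) · σ(z_1⋯z_d) · σ(F(z,t)) = (∑_{σ ∈ G} sgn(σ) σ(z_1⋯z_d)) / (1 − t S(z)) = (z_1 − z_1^{−1})⋯(z_d − z_d^{−1}) / (1 − t S(z)), as elements of ℚ[z_1, z_1^{−1}, …, z_d, z_d^{−1}][[t]]. -/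
/-- Multivariate Laurent polynomials `ℚ[z₁,z₁⁻¹,…,z_d,z_d⁻¹]`. -/
abbrev LPoly (d : ℕ) := AddMonoidAlgebra ℚ (Fin d →₀ ℤ)

/-- The Laurent monomial `z^i`. -/
noncomputable def zmon (d : ℕ) (i : Fin d → ℤ) : LPoly d :=
  AddMonoidAlgebra.ofCoeff (Finsupp.single (Finsupp.equivFunOnFinite.symm i) (1 : ℚ))

/-- The characteristic Laurent polynomial `S(z) = ∑_{s ∈ S} z^s`. -/
noncomputable def charL (d : ℕ) (S : Finset (Fin d → ℤ)) : LPoly d :=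
  ∑ s ∈ S, zmon d s

/-- The substitution `z_k ↦ z_k^{ε_k}` acting on Laurent polynomials. -/
noncomputable def sigmaL (d : ℕ) (ε : Fin d → Bool) (a : LPoly d) : LPoly d :=
  AddMonoidAlgebra.ofCoeff (Finsupp.mapDomain
    (fun e => Finsupp.equivFunOnFinite.symm fun k => (if ε k then 1 else (-1 : ℤ)) * e k) a.coeff)

/-- `sgn(σ_ε) = (-1)^{#{k : ε_k = -1}}`. -/
def sgnL (d : ℕ) (ε : Fin d → Bool) : ℚ :=
  (-1) ^ (Finset.univ.filter fun k => ε k = false).card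

/-- The number of walks of length `n`, with steps in `S`, from the origin, staying in
`ℕ^d` and ending at `i`. -/
noncomputable def WalkCount (d : ℕ) (S : Finset (Fin d → ℤ)) (n : ℕ) (i : Fin d → ℤ) : ℕ :=
  Nat.card {w : Fin n → (Fin d → ℤ) //
    (∀ m, w m ∈ S) ∧
    (∀ m : ℕ, ∀ k, 0 ≤ ∑ l ∈ Finset.univ.filter (fun l : Fin n => (l : ℕ) < m), w l k) ∧
    (∀ k, ∑ m, w m k = i k)}

/-- The full generating function `F(z,t) ∈ ℚ[z,z⁻¹][[t]]` of the walks. -/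
noncomputable def walkGF (d : ℕ) (S : Finset (Fin d → ℤ)) : PowerSeries (LPoly d) :=
  PowerSeries.mk fun n =>
    ∑ i : Fin d → Fin (n + 1),
      ((WalkCount d S n fun j => ((i j : ℕ) : ℤ)) : ℚ) • zmon d fun j => ((i j : ℕ) : ℤ)

namespace OSI
variable {d : ℕ} {S : Finset (Fin d → ℤ)}

def sv (ε : Fin d → Bool) (k : Fin d) : ℤ := if ε k then 1 else -1

noncomputable def sgnAddHom (d : ℕ) (ε : Fin d → Bool) : (Fin d →₀ ℤ) →+ (Fin d →₀ ℤ) where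
  toFun e := Finsupp.equivFunOnFinite.symm fun k => sv ε k * e k
  map_zero' := by ext k; simp
  map_add' a b := by ext k; simp [mul_add]

lemma sigmaL_eq (ε : Fin d → Bool) :
    sigmaL d ε = ⇑(AddMonoidAlgebra.mapDomainRingHom ℚ (sgnAddHom d ε)) := rfl

lemma sigmaL_mul (ε : Fin d → Bool) (a b : LPoly d) :
    sigmaL d ε (a * b) = sigmaL d ε a * sigmaL d ε b := by
  rw [sigmaL_eq]; exact map_mul _ a b

lemma sigmaL_sub (ε : Fin d → Bool) (a b : LPoly d) :
    sigmaL d ε (a - b) = sigmaL d ε a - sigmaL d ε b := by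
  rw [sigmaL_eq]; exact map_sub _ a b

lemma sigmaL_smul (ε : Fin d → Bool) (r : ℚ) (a : LPoly d) :
    sigmaL d ε (r • a) = r • sigmaL d ε a :=
  congrArg AddMonoidAlgebra.ofCoeff (Finsupp.mapDomain_smul r a.coeff)

lemma sigmaL_sum {α : Type*} (ε : Fin d → Bool) (s : Finset α) (f : α → LPoly d) :
    sigmaL d ε (∑ x ∈ s, f x) = ∑ x ∈ s, sigmaL d ε (f x) := by
  rw [sigmaL_eq]; exact map_sum _ f s

lemma sigmaL_zmon (ε : Fin d → Bool) (i : Fin d → ℤ) :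
    sigmaL d ε (zmon d i) = zmon d (fun k => sv ε k * i k) := by
  unfold sigmaL zmon
  rw [AddMonoidAlgebra.coeff_ofCoeff, Finsupp.mapDomain_single]
  congr 1

lemma symm_add (a b : Fin d → ℤ) :
    Finsupp.equivFunOnFinite.symm (a + b)
      = Finsupp.equivFunOnFinite.symm a + Finsupp.equivFunOnFinite.symm b := by
  ext k; simp

lemma zmon_mul (a b : Fin d → ℤ) : zmon d a * zmon d b = zmon d (a + b) := by
  unfold zmon
  rw [AddMonoidAlgebra.ofCoeff_single, AddMonoidAlgebra.ofCoeff_single, AddMonoidAlgebra.ofCoeff_single,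
    AddMonoidAlgebra.single_mul_single, one_mul, symm_add]

lemma zmon_zero : zmon d 0 = 1 := by
  unfold zmon
  have : (Finsupp.equivFunOnFinite.symm (0 : Fin d → ℤ)) = 0 := by ext k; simp
  rw [this]; rfl

/-- sign flip changes the sign of sgnL -/
lemma sgnL_flip (ε : Fin d → Bool) (k₀ : Fin d) :
    sgnL d (fun k => if k = k₀ then !(ε k) else ε k) = - sgnL d ε := by
  unfold sgnL
  by_cases h : ε k₀ = false
  · have hset : (Finset.univ.filter fun k => (if k = k₀ then !(ε k) else ε k) = false)
        = (Finset.univ.filter fun k => ε k = false).erase k₀ := by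
      ext k
      simp only [Finset.mem_filter, Finset.mem_erase, Finset.mem_univ, true_and]
      by_cases hk : k = k₀ <;> simp [hk, h]
    rw [hset, Finset.card_erase_of_mem (by simp [h])]
    have hpos : 0 < (Finset.univ.filter fun k => ε k = false).card :=
      Finset.card_pos.2 ⟨k₀, by simp [h]⟩
    obtain ⟨m, hm⟩ : ∃ m, (Finset.univ.filter fun k => ε k = false).card = m + 1 :=
      ⟨_, (Nat.succ_pred_eq_of_pos hpos).symm⟩
    rw [hm]
    simp [pow_succ]
  · have h' : ε k₀ = true := by simpa using h
    have hset : (Finset.univ.filter fun k => (if k = k₀ then !(ε k) else ε k) = false)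
        = insert k₀ (Finset.univ.filter fun k => ε k = false) := by
      ext k
      simp only [Finset.mem_filter, Finset.mem_insert, Finset.mem_univ, true_and]
      by_cases hk : k = k₀ <;> simp [hk, h']
    rw [hset, Finset.card_insert_of_notMem (by simp [h']), pow_succ]
    ring

/-- the orbit sum operator -/
noncomputable def OSf (d : ℕ) (a : LPoly d) : LPoly d :=
  ∑ ε : Fin d → Bool, sgnL d ε • sigmaL d ε (zmon d (fun _ => 1) * a)

lemma OSf_sub (a b : LPoly d) : OSf d (a - b) = OSf d a - OSf d b := by
  unfold OSf
  rw [← Finset.sum_sub_distrib]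
  apply Finset.sum_congr rfl
  intro ε _
  rw [mul_sub, sigmaL_sub, smul_sub]

lemma OSf_smul (r : ℚ) (a : LPoly d) : OSf d (r • a) = r • OSf d a := by
  unfold OSf
  rw [Finset.smul_sum]
  apply Finset.sum_congr rfl
  intro ε _
  rw [mul_smul_comm, sigmaL_smul, smul_comm]

lemma OSf_sum {α : Type*} (s : Finset α) (f : α → LPoly d) :
    OSf d (∑ x ∈ s, f x) = ∑ x ∈ s, OSf d (f x) := by
  unfold OSf
  rw [Finset.sum_comm]
  apply Finset.sum_congr rfl
  intro ε _
  rw [Finset.mul_sum, sigmaL_sum, Finset.smul_sum]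

lemma OSf_zmon_eq_zero (i : Fin d → ℤ) (k₀ : Fin d) (h : i k₀ = -1) :
    OSf d (zmon d i) = 0 := by
  unfold OSf
  apply Finset.sum_ninvolution (fun ε => fun k => if k = k₀ then !(ε k) else ε k)
  · intro ε
    rw [zmon_mul]
    set v : Fin d → ℤ := (fun _ => 1) + i with hv
    rw [sigmaL_zmon, sigmaL_zmon, sgnL_flip]
    have hv0 : v k₀ = 0 := by
      rw [hv, Pi.add_apply, h]; ring
    have hexp : (fun k => sv (fun k' => if k' = k₀ then !(ε k') else ε k') k * v k)
        = fun k => sv ε k * v k := by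
      funext k
      by_cases hk : k = k₀
      · subst hk
        rw [hv0, mul_zero, mul_zero]
      · simp [sv, hk]
    rw [hexp, neg_smul, add_neg_cancel]
  · intro ε _ heq
    have := congrFun heq k₀
    simp at this
  · intro ε; exact Finset.mem_univ _
  · intro ε
    funext k
    by_cases hk : k = k₀ <;> simp [hk]

/-- coefficient of `z^j` -/
noncomputable def co (a : LPoly d) (j : Fin d → ℤ) : ℚ := a.coeff (Finsupp.equivFunOnFinite.symm j)

lemma co_zmon (i j : Fin d → ℤ) : co (zmon d i) j = if j = i then 1 else 0 := by
  unfold co zmon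
  rw [AddMonoidAlgebra.coeff_ofCoeff, Finsupp.single_apply]
  simp [eq_comm, EmbeddingLike.apply_eq_iff_eq]

lemma co_add (a b : LPoly d) (j : Fin d → ℤ) : co (a + b) j = co a j + co b j := rfl
lemma co_sub (a b : LPoly d) (j : Fin d → ℤ) : co (a - b) j = co a j - co b j := rfl
lemma co_smul (r : ℚ) (a : LPoly d) (j : Fin d → ℤ) : co (r • a) j = r * co a j := rfl

lemma co_sum {α : Type*} (s : Finset α) (f : α → LPoly d) (j : Fin d → ℤ) :
    co (∑ x ∈ s, f x) j = ∑ x ∈ s, co (f x) j := by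
  unfold co
  rw [AddMonoidAlgebra.coeff_sum, Finset.sum_apply']

lemma co_zmon_mul (s : Fin d → ℤ) (A : LPoly d) (j : Fin d → ℤ) :
    co (zmon d s * A) j = co A (j - s) := by
  unfold co zmon
  rw [AddMonoidAlgebra.ofCoeff_single, AddMonoidAlgebra.coeff_single_mul_apply, one_mul]
  congr 1
  ext k; simp [sub_eq_neg_add]

lemma co_charL_mul (A : LPoly d) (j : Fin d → ℤ) :
    co (charL d S * A) j = ∑ s ∈ S, co A (j - s) := by
  unfold charL
  rw [Finset.sum_mul, co_sum]
  exact Finset.sum_congr rfl fun s _ => co_zmon_mul s A j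

lemma co_ext {a b : LPoly d} (h : ∀ j, co a j = co b j) : a = b := by
  ext e
  have := h (Finsupp.equivFunOnFinite e)
  unfold co at this
  simpa using this

lemma OSf_eq_zero_of_support (a : LPoly d) (h : ∀ j, co a j ≠ 0 → ∃ k, j k = -1) :
    OSf d a = 0 := by
  have ha : a = ∑ e ∈ a.coeff.support, (a.coeff e) • zmon d (Finsupp.equivFunOnFinite e) := by
    have h1 : ∀ e : Fin d →₀ ℤ, (a.coeff e) • zmon d (Finsupp.equivFunOnFinite e)
        = AddMonoidAlgebra.single e (a.coeff e) := by
      intro e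
      unfold zmon
      rw [Equiv.symm_apply_apply, ← AddMonoidAlgebra.ofCoeff_smul, Finsupp.smul_single]
      simp
    rw [Finset.sum_congr rfl fun e _ => h1 e]
    exact (AddMonoidAlgebra.sum_coeff_single a).symm
  rw [ha, OSf_sum]
  apply Finset.sum_eq_zero
  intro e he
  rw [OSf_smul]
  obtain ⟨k, hk⟩ := h (Finsupp.equivFunOnFinite e) (by
    unfold co
    rw [Equiv.symm_apply_apply]
    exact Finsupp.mem_support_iff.1 he)
  rw [OSf_zmon_eq_zero _ k hk, smul_zero]

/-- closure of S under arbitrary coordinate sign flips -/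
lemma flips_mem (hsym : ∀ s ∈ S, ∀ k, Function.update s k (-(s k)) ∈ S)
    (A : Finset (Fin d)) (s : Fin d → ℤ) (hs : s ∈ S) :
    (fun k => if k ∈ A then -(s k) else s k) ∈ S := by
  classical
  induction A using Finset.induction_on with
  | empty => simpa using hs
  | @insert a A ha ih =>
    have : (fun k => if k ∈ insert a A then -(s k) else s k)
        = Function.update (fun k => if k ∈ A then -(s k) else s k) a
            (-((fun k => if k ∈ A then -(s k) else s k) a)) := by
      funext k
      by_cases hk : k = a
      · subst hk
        simp [ha, Function.update_self]
      · simp [Function.update_of_ne hk, hk]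
    rw [this]
    exact hsym _ ih a
  
lemma sv_mem (hsym : ∀ s ∈ S, ∀ k, Function.update s k (-(s k)) ∈ S)
    (ε : Fin d → Bool) (s : Fin d → ℤ) (hs : s ∈ S) :
    (fun k => sv ε k * s k) ∈ S := by
  have : (fun k => sv ε k * s k)
      = fun k => if k ∈ Finset.univ.filter (fun k => ε k = false) then -(s k) else s k := by
    funext k
    by_cases hk : ε k <;> simp [sv, hk]
  rw [this]
  exact flips_mem hsym _ s hs

lemma sigmaL_charL (hsym : ∀ s ∈ S, ∀ k, Function.update s k (-(s k)) ∈ S)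
    (ε : Fin d → Bool) : sigmaL d ε (charL d S) = charL d S := by
  unfold charL
  rw [sigmaL_sum]
  rw [Finset.sum_congr rfl fun s _ => sigmaL_zmon ε s]
  apply Finset.sum_nbij' (fun s => fun k => sv ε k * s k) (fun s => fun k => sv ε k * s k)
  · intro s hs; exact sv_mem hsym ε s hs
  · intro s hs; exact sv_mem hsym ε s hs
  · intro s _
    funext k
    by_cases hk : ε k <;> simp [sv, hk]
  · intro s _
    funext k
    by_cases hk : ε k <;> simp [sv, hk]
  · intro s _; rfl

lemma OSf_charL_mul (hsym : ∀ s ∈ S, ∀ k, Function.update s k (-(s k)) ∈ S) (a : LPoly d) :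
    OSf d (charL d S * a) = charL d S * OSf d a := by
  unfold OSf
  rw [Finset.mul_sum]
  apply Finset.sum_congr rfl
  intro ε _
  rw [mul_left_comm, sigmaL_mul, sigmaL_charL hsym, mul_smul_comm]

variable {d : ℕ} {S : Finset (Fin d → ℤ)}

/-- the walk predicate -/
def WP (S : Finset (Fin d → ℤ)) (n : ℕ) (i : Fin d → ℤ) (w : Fin n → (Fin d → ℤ)) : Prop :=
  (∀ m, w m ∈ S) ∧
  (∀ m : ℕ, ∀ k, 0 ≤ ∑ l ∈ Finset.univ.filter (fun l : Fin n => (l : ℕ) < m), w l k) ∧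
  (∀ k, ∑ m, w m k = i k)

lemma walkCount_def (n : ℕ) (i : Fin d → ℤ) :
    WalkCount d S n i = Nat.card {w // WP S n i w} := rfl

lemma wp_finite (n : ℕ) (i : Fin d → ℤ) : Finite {w // WP S n i w} := by
  apply Finite.of_injective (fun w => (fun m => (⟨w.1 m, w.2.1 m⟩ : {x // x ∈ S}) : Fin n → {x // x ∈ S}))
  intro w w' h
  apply Subtype.ext
  funext m
  exact congrArg Subtype.val (congrFun h m)

lemma walkCount_eq_zero_of_neg (n : ℕ) (i : Fin d → ℤ) (h : ¬ ∀ k, 0 ≤ i k) :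
    WalkCount d S n i = 0 := by
  rw [walkCount_def]
  rw [Nat.card_eq_zero]
  left
  constructor
  rintro ⟨w, hw1, hw2, hw3⟩
  apply h
  intro k
  have := hw2 n k
  rwa [Finset.filter_true_of_mem (fun l _ => l.isLt), hw3 k] at this

lemma walkCount_eq_zero_of_big
    (hsteps : ∀ s ∈ S, (∀ k, s k = -1 ∨ s k = 0 ∨ s k = 1) ∧ s ≠ 0)
    (n : ℕ) (i : Fin d → ℤ) (k : Fin d) (h : (n : ℤ) < i k) :
    WalkCount d S n i = 0 := by
  rw [walkCount_def, Nat.card_eq_zero]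
  left
  constructor
  rintro ⟨w, hw1, hw2, hw3⟩
  have hle : ∑ m, w m k ≤ (n : ℤ) := by
    calc ∑ m, w m k ≤ ∑ _m : Fin n, (1 : ℤ) := by
          apply Finset.sum_le_sum
          intro m _
          rcases (hsteps _ (hw1 m)).1 k with h' | h' | h' <;> omega
      _ = n := by simp
  rw [hw3 k] at hle
  omega

/-- partial sums after a snoc decomposition -/
lemma partial_snoc (n : ℕ) (w : Fin (n+1) → (Fin d → ℤ)) (m : ℕ) (k : Fin d) :
    ∑ l ∈ Finset.univ.filter (fun l : Fin (n+1) => (l : ℕ) < m), w l k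
      = (∑ l ∈ Finset.univ.filter (fun l : Fin n => (l : ℕ) < m), w l.castSucc k)
        + (if n < m then w (Fin.last n) k else 0) := by
  rw [Finset.sum_filter, Finset.sum_filter, Fin.sum_univ_castSucc]
  simp

lemma walk_rec (n : ℕ) (j : Fin d → ℤ) (hj : ∀ k, 0 ≤ j k) :
    WalkCount d S (n+1) j = ∑ s ∈ S, WalkCount d S n (j - s) := by
  rw [walkCount_def]
  have e : {w // WP S (n+1) j w} ≃ Σ s : {x // x ∈ S}, {w // WP S n (j - s.1) w} := by
    refine ⟨?_, ?_, ?_, ?_⟩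
    · rintro ⟨w, hw1, hw2, hw3⟩
      refine ⟨⟨w (Fin.last n), hw1 _⟩, ⟨fun m => w m.castSucc, ?_, ?_, ?_⟩⟩
      · intro m; exact hw1 _
      · intro m k
        by_cases hm : m ≤ n
        · have := hw2 m k
          rw [partial_snoc, if_neg (by omega), add_zero] at this
          exact this
        · rw [Finset.filter_true_of_mem (fun l _ => by have := l.isLt; omega)]
          have := hw2 n k
          rw [partial_snoc, if_neg (by omega), add_zero,
            Finset.filter_true_of_mem (fun l _ => l.isLt)] at this
          exact this
      · intro k
        have := hw3 k
        rw [Fin.sum_univ_castSucc] at this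
        simp only [Pi.sub_apply]
        omega
    · rintro ⟨⟨s, hs⟩, ⟨u, hu1, hu2, hu3⟩⟩
      refine ⟨Fin.snoc u s, ?_, ?_, ?_⟩
      · intro m
        induction m using Fin.lastCases with
        | last => rw [Fin.snoc_last]; exact hs
        | cast i => rw [Fin.snoc_castSucc]; exact hu1 i
      · intro m k
        rw [partial_snoc]
        simp only [Fin.snoc_castSucc, Fin.snoc_last]
        by_cases hm : n < m
        · rw [if_pos hm, Finset.filter_true_of_mem (fun l _ => by have := l.isLt; omega)]
          have h3 := hu3 k
          simp only [Pi.sub_apply] at h3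
          have := hj k
          omega
        · rw [if_neg hm, add_zero]; exact hu2 m k
      · intro k
        rw [Fin.sum_univ_castSucc]
        simp only [Fin.snoc_castSucc, Fin.snoc_last]
        have h3 := hu3 k
        simp only [Pi.sub_apply] at h3
        omega
    · rintro ⟨w, hw1, hw2, hw3⟩
      apply Subtype.ext
      exact Fin.snoc_init_self w
    · rintro ⟨⟨s, hs⟩, ⟨u, hu1, hu2, hu3⟩⟩
      refine Sigma.subtype_ext (Subtype.ext ?_) ?_
      · show Fin.snoc (α := fun _ => Fin d → ℤ) u s (Fin.last n) = s
        exact Fin.snoc_last _ _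
      · show (fun m => Fin.snoc (α := fun _ => Fin d → ℤ) u s m.castSucc) = u
        funext m
        exact Fin.snoc_castSucc _ _ m
  rw [Nat.card_congr e]
  haveI : ∀ s : {x // x ∈ S}, Fintype {w // WP S n (j - s.1) w} := fun s =>
    @Fintype.ofFinite _ (wp_finite _ _)
  rw [Nat.card_eq_fintype_card, Fintype.card_sigma]
  rw [← Finset.sum_coe_sort S (fun s => WalkCount d S n (j - s))]
  apply Finset.sum_congr rfl
  intro s _
  rw [walkCount_def, Nat.card_eq_fintype_card]

lemma walkCount_zero (i : Fin d → ℤ) :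
    WalkCount d S 0 i = if i = 0 then 1 else 0 := by
  rw [walkCount_def]
  split
  · rename_i h
    subst h
    haveI : Unique {w // WP S 0 (0 : Fin d → ℤ) w} := by
      refine ⟨⟨⟨fun m => m.elim0, ?_, ?_, ?_⟩⟩, ?_⟩
      · intro m; exact m.elim0
      · intro m k; simp
      · intro k; simp
      · rintro ⟨w, hw⟩
        apply Subtype.ext
        funext m; exact m.elim0
    exact Nat.card_unique
  · rename_i h
    rw [Nat.card_eq_zero]
    left
    constructor
    rintro ⟨w, hw1, hw2, hw3⟩
    apply h
    funext k
    have := hw3 k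
    simpa using this.symm


end OSI

namespace OSI
variable {d : ℕ} {S : Finset (Fin d → ℤ)}

/-- coefficient of `t^n` in the walk generating function -/
noncomputable def Fn (d : ℕ) (S : Finset (Fin d → ℤ)) (n : ℕ) : LPoly d :=
  ∑ i : Fin d → Fin (n + 1),
    ((WalkCount d S n fun j => ((i j : ℕ) : ℤ)) : ℚ) • zmon d fun j => ((i j : ℕ) : ℤ)

lemma coeff_walkGF (n : ℕ) : PowerSeries.coeff n (walkGF d S) = Fn d S n := by
  unfold walkGF Fn
  rw [PowerSeries.coeff_mk]

lemma co_Fn (hsteps : ∀ s ∈ S, (∀ k, s k = -1 ∨ s k = 0 ∨ s k = 1) ∧ s ≠ 0)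
    (n : ℕ) (j : Fin d → ℤ) :
    co (Fn d S n) j = (WalkCount d S n j : ℚ) := by
  unfold Fn
  rw [co_sum]
  have hterm : ∀ i : Fin d → Fin (n + 1),
      co (((WalkCount d S n fun j => ((i j : ℕ) : ℤ)) : ℚ) • zmon d fun j => ((i j : ℕ) : ℤ)) j
        = ((WalkCount d S n fun j => ((i j : ℕ) : ℤ)) : ℚ)
            * (if j = (fun j => ((i j : ℕ) : ℤ)) then 1 else 0) := by
    intro i
    rw [co_smul, co_zmon]
  rw [Finset.sum_congr rfl fun i _ => hterm i]
  by_cases h : ∀ k, 0 ≤ j k ∧ j k ≤ (n : ℤ)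
  · have hbd : ∀ k, (j k).toNat < n + 1 := by
      intro k
      have := (h k).1; have := (h k).2
      omega
    set i₀ : Fin d → Fin (n + 1) := fun k => ⟨(j k).toNat, hbd k⟩ with hi₀
    have hcast : (fun k => (((i₀ k : ℕ) : ℤ))) = j := by
      funext k
      simp [hi₀, Int.toNat_of_nonneg (h k).1]
    rw [Finset.sum_eq_single i₀]
    · rw [hcast, if_pos rfl, mul_one]
    · intro i _ hne
      rw [if_neg, mul_zero]
      intro hj
      apply hne
      funext k
      apply Fin.ext
      have := congrFun hj k
      simp [hi₀, this]
    · intro habs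
      exact absurd (Finset.mem_univ i₀) habs
  · push_neg at h
    obtain ⟨k, hk⟩ := h
    have hW : WalkCount d S n j = 0 := by
      by_cases h0 : 0 ≤ j k
      · exact walkCount_eq_zero_of_big hsteps n j k (hk h0)
      · exact walkCount_eq_zero_of_neg n j (fun hall => h0 (hall k))
    rw [hW]
    rw [Finset.sum_eq_zero]
    · simp
    · intro i _
      rw [if_neg, mul_zero]
      intro hj
      rw [hj] at hk
      have hk2 : ¬ (0 ≤ ((i k : ℕ) : ℤ) → ((i k : ℕ) : ℤ) ≤ (n:ℤ)) := by simpa using hk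
      have h1 : ((i k : ℕ) : ℤ) ≤ n := by
        have := (i k).isLt
        omega
      omega

/-- the orbit-sum prefactor -/
noncomputable def Delta (d : ℕ) : LPoly d :=
  ∑ ε : Fin d → Bool, sgnL d ε • sigmaL d ε (zmon d fun _ => 1)

lemma Fn_zero (hsteps : ∀ s ∈ S, (∀ k, s k = -1 ∨ s k = 0 ∨ s k = 1) ∧ s ≠ 0) :
    Fn d S 0 = 1 := by
  apply co_ext
  intro j
  rw [co_Fn hsteps, walkCount_zero, ← zmon_zero, co_zmon]
  split <;> simp

lemma OSf_Fn (hsteps : ∀ s ∈ S, (∀ k, s k = -1 ∨ s k = 0 ∨ s k = 1) ∧ s ≠ 0)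
    (hsym : ∀ s ∈ S, ∀ k, Function.update s k (-(s k)) ∈ S) (n : ℕ) :
    OSf d (Fn d S n) = Delta d * charL d S ^ n := by
  induction n with
  | zero =>
    rw [Fn_zero hsteps, pow_zero, mul_one]
    unfold OSf Delta
    apply Finset.sum_congr rfl
    intro ε _
    rw [mul_one]
  | succ n ih =>
    have hE : Fn d S (n+1) = charL d S * Fn d S n - (charL d S * Fn d S n - Fn d S (n+1)) := by
      ring
    rw [hE, OSf_sub, OSf_charL_mul hsym, ih]
    have hzero : OSf d (charL d S * Fn d S n - Fn d S (n+1)) = 0 := by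
      apply OSf_eq_zero_of_support
      intro j hne
      have hco : co (charL d S * Fn d S n - Fn d S (n+1)) j
          = (∑ s ∈ S, (WalkCount d S n (j - s) : ℚ)) - (WalkCount d S (n+1) j : ℚ) := by
        rw [co_sub, co_charL_mul, co_Fn hsteps]
        rw [Finset.sum_congr rfl fun s _ => co_Fn hsteps n (j - s)]
      rw [hco] at hne
      by_cases hj : ∀ k, 0 ≤ j k
      · exfalso
        apply hne
        rw [walk_rec n j hj]
        rw [Nat.cast_sum]
        ring
      · push_neg at hj
        obtain ⟨k₀, hk₀⟩ := hj
        have hW : WalkCount d S (n+1) j = 0 :=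
          walkCount_eq_zero_of_neg _ _ (fun hall => by have := hall k₀; omega)
        rw [hW, Nat.cast_zero, sub_zero] at hne
        have hex : ∃ s ∈ S, (WalkCount d S n (j - s) : ℚ) ≠ 0 := by
          by_contra hall
          push_neg at hall
          exact hne (Finset.sum_eq_zero hall)
        obtain ⟨s, hsS, hWs⟩ := hex
        have hnn : ∀ k, 0 ≤ (j - s) k := by
          by_contra hc
          exact hWs (by rw [walkCount_eq_zero_of_neg n _ hc, Nat.cast_zero])
        refine ⟨k₀, ?_⟩
        have h1 := hnn k₀
        have h2 := ((hsteps s hsS).1 k₀)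
        simp only [Pi.sub_apply] at h1
        omega
    rw [hzero, sub_zero]
    ring

end OSI

namespace OSI
variable {d : ℕ}

lemma prod_zmon (t : Finset (Fin d)) (u : Fin d → (Fin d → ℤ)) :
    ∏ k ∈ t, zmon d (u k) = zmon d (∑ k ∈ t, u k) := by
  classical
  induction t using Finset.induction_on with
  | empty => simp [zmon_zero]
  | @insert a A ha ih =>
    rw [Finset.prod_insert ha, Finset.sum_insert ha, ih, zmon_mul]

lemma Delta_eq :
    Delta d = ∏ k, (zmon d (fun j => if j = k then 1 else 0) -
      zmon d (fun j => if j = k then -1 else 0)) := by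
  classical
  have hrw : ∀ k : Fin d, zmon d (fun j => if j = k then (1:ℤ) else 0) -
      zmon d (fun j => if j = k then -1 else 0)
      = zmon d (fun j => if j = k then (1:ℤ) else 0) +
        (- zmon d (fun j => if j = k then -1 else 0)) := fun k => sub_eq_add_neg _ _
  rw [Finset.prod_congr rfl fun k _ => hrw k, Finset.prod_add]
  unfold Delta
  rw [Finset.sum_congr rfl fun ε _ => by rw [sigmaL_zmon ε]]
  simp only [mul_one]
  symm
  apply Finset.sum_nbij' (i := fun t => fun k => decide (k ∈ t))
    (j := fun ε => Finset.univ.filter (fun k => ε k = true))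
  · intro t _; exact Finset.mem_univ _
  · intro ε _
    simp
  · intro t _
    ext k
    simp
  · intro ε _
    funext k
    by_cases hk : ε k <;> simp [hk]
  · intro t ht
    -- term equality
    have hneg : ∏ k ∈ Finset.univ \ t, (- zmon d (fun j => if j = k then (-1:ℤ) else 0))
        = (-1 : LPoly d) ^ (Finset.univ \ t).card
          * ∏ k ∈ Finset.univ \ t, zmon d (fun j => if j = k then (-1:ℤ) else 0) := by
      rw [Finset.prod_congr rfl fun k _ => neg_eq_neg_one_mul _, Finset.prod_mul_distrib,
        Finset.prod_const]
    rw [hneg, prod_zmon, prod_zmon]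
    have hsgn : ((-1 : LPoly d) ^ (Finset.univ \ t).card)
        = ((sgnL d (fun k => decide (k ∈ t))) : ℚ) • (1 : LPoly d) := by
      have hcard : (Finset.univ \ t).card
          = (Finset.univ.filter fun k => (decide (k ∈ t)) = false).card := by
        congr 1
        ext k
        simp [Finset.mem_sdiff]
      unfold sgnL
      rw [hcard, Algebra.smul_def, map_pow, map_neg, map_one]
      simp
    have hexp : ((∑ k ∈ t, fun j => if j = k then (1:ℤ) else 0) +
        ∑ k ∈ Finset.univ \ t, fun j => if j = k then (-1:ℤ) else 0)
        = fun k => sv (fun k' => decide (k' ∈ t)) k := by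
      funext j
      rw [Pi.add_apply, Finset.sum_apply, Finset.sum_apply]
      rw [Finset.sum_ite_eq, Finset.sum_ite_eq]
      by_cases hj : j ∈ t <;> simp [sv, hj, Finset.mem_sdiff]
    calc zmon d (∑ k ∈ t, fun j => if j = k then (1:ℤ) else 0) *
          (((-1 : LPoly d) ^ (Finset.univ \ t).card)
            * zmon d (∑ k ∈ Finset.univ \ t, fun j => if j = k then (-1:ℤ) else 0))
        = ((-1 : LPoly d) ^ (Finset.univ \ t).card)
            * (zmon d (∑ k ∈ t, fun j => if j = k then (1:ℤ) else 0)
              * zmon d (∑ k ∈ Finset.univ \ t, fun j => if j = k then (-1:ℤ) else 0)) := by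
          ring
      _ = (sgnL d (fun k' => decide (k' ∈ t))) •
            zmon d (fun k => sv (fun k' => decide (k' ∈ t)) k) := by
          rw [hsgn, zmon_mul, hexp, smul_mul_assoc, one_mul]
    
end OSI

/-- The orbit sum identity: the signed sum over the group `G` of sign substitutions of
`σ(z₁⋯z_d)σ(F(z,t))` equals `(∑_σ sgn(σ)σ(z₁⋯z_d))/(1-tS(z))
= (z₁-z₁⁻¹)⋯(z_d-z_d⁻¹)/(1-tS(z))`, where `1/(1-tS(z)) = ∑_n S(z)^n t^n`. -/
theorem orbit_sum_identity (d : ℕ) (S : Finset (Fin d → ℤ))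
    (hsteps : ∀ s ∈ S, (∀ k, s k = -1 ∨ s k = 0 ∨ s k = 1) ∧ s ≠ 0)
    (hsym : ∀ s ∈ S, ∀ k, Function.update s k (-(s k)) ∈ S)
    (hfwd : ∀ k, ∃ s ∈ S, s k = 1) :
    (∑ ε : Fin d → Bool,
        sgnL d ε • (PowerSeries.C (sigmaL d ε (zmon d fun _ => 1)) *
          PowerSeries.mk fun n => sigmaL d ε (PowerSeries.coeff n (walkGF d S)))) =
      PowerSeries.C (∑ ε : Fin d → Bool, sgnL d ε • sigmaL d ε (zmon d fun _ => 1)) *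
        PowerSeries.mk (fun n => charL d S ^ n) ∧
    (∑ ε : Fin d → Bool, sgnL d ε • sigmaL d ε (zmon d fun _ => 1)) =
      ∏ k, (zmon d (fun j => if j = k then 1 else 0) -
            zmon d (fun j => if j = k then -1 else 0)) := by
  have hDelta : (∑ ε : Fin d → Bool, sgnL d ε • sigmaL d ε (zmon d fun _ => 1)) = OSI.Delta d :=
    rfl
  constructor
  · apply PowerSeries.ext
    intro n
    rw [map_sum]
    have hterm : ∀ ε : Fin d → Bool,
        (PowerSeries.coeff n) (sgnL d ε • (PowerSeries.C (sigmaL d ε (zmon d fun _ => 1)) *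
          PowerSeries.mk fun m => sigmaL d ε (PowerSeries.coeff m (walkGF d S))))
        = sgnL d ε • sigmaL d ε ((zmon d fun _ => 1) * OSI.Fn d S n) := by
      intro ε
      rw [PowerSeries.coeff_smul, PowerSeries.coeff_C_mul, PowerSeries.coeff_mk,
        OSI.coeff_walkGF, OSI.sigmaL_mul]
    rw [Finset.sum_congr rfl fun ε _ => hterm ε]
    rw [PowerSeries.coeff_C_mul, PowerSeries.coeff_mk, hDelta]
    exact OSI.OSf_Fn hsteps hsym n
  · rw [hDelta]
    exact OSI.Delta_eq
end

section
/- Let B(z,t) ∈ ℚ[z_1,z_1^{−1},…,z_d,z_d^{−1}][[t]] and suppose every monomial appearing in σ(z_1⋯z_d)·σ(B(z,t)) for a non-identity sign substitution σ (σ: z_k ↦ z_k^{ε_k}, ε ≠ (1,…,1)) contains a negative power of at least one variable z_k with ε_k = −1. Then applying the non-negative part extraction [z_1^{≥0}]⋯[z_d^{≥0}] to the telescoped orbit sum ∑_{σ} sgn(σ) σ(z_1⋯z_d) σ(F(z,t)) yields (z_1⋯z_d)·F(z,t); in particular, [z_1^{≥0}]⋯[z_d^{≥0}] of (z_1 − z_1^{−1})⋯(z_d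 − z_d^{−1})/(1 − tS(z)) equals (z_1⋯z_d)F(z,t), so F(z,t) is recovered as a positive-part extraction of an explicit rational series. -/
open scoped Classical in
/-- The non-negative part extraction `[z₁^{≥0}]⋯[z_d^{≥0}]`, keeping only Laurent
monomials all of whose exponents are non-negative. -/
noncomputable def posPart (d : ℕ) (a : LPoly d) : LPoly d :=
  AddMonoidAlgebra.ofCoeff (Finsupp.filter (fun e : Fin d →₀ ℤ => ∀ k, 0 ≤ e k) a.coeff)

namespace OS
open Finset
open scoped Classical

variable {d : ℕ}

lemma zmon_add (x y : Fin d → ℤ) : zmon d (x + y) = zmon d x * zmon d y := by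
  unfold zmon
  simp only [AddMonoidAlgebra.ofCoeff_single]
  rw [AddMonoidAlgebra.single_mul_single, one_mul]
  congr 1; ext a; simp

lemma zmon_zero : zmon d 0 = 1 := by
  unfold zmon
  simp only [AddMonoidAlgebra.ofCoeff_single]
  rw [AddMonoidAlgebra.one_def]
  congr 1; ext a; simp

lemma zmon_prod {α : Type*} (s : Finset α) (f : α → Fin d → ℤ) :
    ∏ a ∈ s, zmon d (f a) = zmon d (∑ a ∈ s, f a) := by
  induction s using Finset.induction with
  | empty => simp [zmon_zero]
  | insert _ _ h ih => rw [Finset.prod_insert h, Finset.sum_insert h, zmon_add, ih]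

lemma posPart_sum {α : Type*} (s : Finset α) (f : α → LPoly d) :
    posPart d (∑ a ∈ s, f a) = ∑ a ∈ s, posPart d (f a) := by
  classical
  unfold _root_.posPart
  rw [AddMonoidAlgebra.coeff_sum, ← AddMonoidAlgebra.ofCoeff_sum]
  congr 1
  exact map_sum (Finsupp.filterAddHom _) _ s

lemma posPart_single (e : Fin d →₀ ℤ) (c : ℚ) :
    posPart d (AddMonoidAlgebra.single e c) =
      if (∀ k, 0 ≤ e k) then AddMonoidAlgebra.single e c else 0 := by
  unfold _root_.posPart
  rw [AddMonoidAlgebra.coeff_single]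
  split
  · rw [Finsupp.filter_single_of_pos _ ‹_›]; rfl
  · rw [Finsupp.filter_single_of_neg _ ‹_›]; rfl

/-- discrete IVT, ascending -/
lemma ivt_up (p : ℕ → ℤ) (h : ∀ m, p (m+1) ≤ p m + 1) (n : ℕ) (c : ℤ)
    (h0 : p 0 < c) (hn : c ≤ p n) : ∃ m, m ≤ n ∧ p m = c := by
  induction n with
  | zero => omega
  | succ n ih =>
    by_cases hc : c ≤ p n
    · obtain ⟨m, hm, hmc⟩ := ih hc
      exact ⟨m, by omega, hmc⟩
    · exact ⟨n+1, le_refl _, by have := h n; omega⟩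

/-- discrete IVT, descending -/
lemma ivt_down (p : ℕ → ℤ) (h : ∀ m, p m - 1 ≤ p (m+1)) (n : ℕ) (c : ℤ)
    (h0 : c < p 0) (hn : p n ≤ c) : ∃ m, m ≤ n ∧ p m = c := by
  obtain ⟨m, hm, hmc⟩ := ivt_up (fun m => -p m) (fun m => by have := h m; omega) n (-c)
    (by omega) (by omega)
  exact ⟨m, hm, by omega⟩


lemma smul_zmon (c : ℚ) (x : Fin d → ℤ) :
    c • zmon d x = AddMonoidAlgebra.single (Finsupp.equivFunOnFinite.symm x) c := by
  unfold zmon; rw [AddMonoidAlgebra.ofCoeff_single, AddMonoidAlgebra.smul_single, smul_eq_mul, mul_one]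

variable (S : Finset (Fin d → ℤ)) (n : ℕ)

/-- partial sums -/
def psum {n : ℕ} (v : Fin n → Fin d → ℤ) (m : ℕ) (k : Fin d) : ℤ :=
  ∑ l ∈ Finset.univ.filter (fun l : Fin n => (l : ℕ) < m), v l k

def esum {n : ℕ} (v : Fin n → Fin d → ℤ) (k : Fin d) : ℤ := ∑ m, v m k

lemma psum_zero {n : ℕ} (v : Fin n → Fin d → ℤ) (k : Fin d) : psum v 0 k = 0 := by
  unfold psum
  rw [Finset.filter_false_of_mem (by simp)]
  simp

lemma psum_succ {n : ℕ} (v : Fin n → Fin d → ℤ) (m : ℕ) (k : Fin d) :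
    psum v (m+1) k = psum v m k + (if h : m < n then v ⟨m, h⟩ k else 0) := by
  unfold psum
  split
  · rename_i h
    have : Finset.univ.filter (fun l : Fin n => (l : ℕ) < m + 1) =
        insert ⟨m, h⟩ (Finset.univ.filter (fun l : Fin n => (l : ℕ) < m)) := by
      ext l; simp [Fin.ext_iff]; omega
    rw [this, Finset.sum_insert (by simp)]
    ring
  · rename_i h
    have : Finset.univ.filter (fun l : Fin n => (l : ℕ) < m + 1) =
        Finset.univ.filter (fun l : Fin n => (l : ℕ) < m) := by
      ext l; simp; have := l.isLt; omega
    rw [this, add_zero]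

lemma psum_of_ge {n : ℕ} (v : Fin n → Fin d → ℤ) (m : ℕ) (hm : n ≤ m) (k : Fin d) :
    psum v m k = esum v k := by
  unfold psum esum
  rw [Finset.filter_true_of_mem (fun l _ => lt_of_lt_of_le l.isLt hm)]

lemma psum_n {n : ℕ} (v : Fin n → Fin d → ℤ) (k : Fin d) : psum v n k = esum v k :=
  psum_of_ge v n le_rfl k

def eps (T : Finset (Fin d)) (k : Fin d) : ℤ := if k ∈ T then 1 else -1

/-- position at time m -/
def wpos (T : Finset (Fin d)) {n : ℕ} (v : Fin n → Fin d → ℤ) (m : ℕ) (k : Fin d) : ℤ :=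
  eps T k + psum v m k

abbrev Pair (S : Finset (Fin d → ℤ)) (n : ℕ) :=
  Finset (Fin d) × (Fin n → {s : Fin d → ℤ // s ∈ S})

def stv {n : ℕ} (w : Fin n → {s : Fin d → ℤ // s ∈ S}) : Fin n → Fin d → ℤ :=
  fun l => (w l).1

/-- endpoint -/
def endf (p : Pair S n) (k : Fin d) : ℤ := eps p.1 k + esum (stv S p.2) k

noncomputable def term (p : Pair S n) : LPoly d :=
  AddMonoidAlgebra.single (Finsupp.equivFunOnFinite.symm (endf S n p))
    ((-1 : ℚ) ^ ((Finset.univ \ p.1).card))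

lemma expand :
    (∏ k, (zmon d (fun j => if j = k then 1 else 0) -
        zmon d (fun j => if j = k then -1 else 0))) * charL d S ^ n =
      ∑ p : Pair S n, term S n p := by
  have hchar : charL d S ^ n = ∑ w : Fin n → {s : Fin d → ℤ // s ∈ S},
      zmon d (fun k => esum (stv S w) k) := by
    have h1 : charL d S = ∑ s : {s : Fin d → ℤ // s ∈ S}, zmon d s.1 := by
      rw [charL, ← Finset.sum_coe_sort S (fun s => zmon d s)]
    have h2 : charL d S ^ n = ∏ _m : Fin n, charL d S := by
      rw [Finset.prod_const, Finset.card_univ, Fintype.card_fin]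
    rw [h2, h1]
    rw [Finset.prod_univ_sum]
    rw [Fintype.piFinset_univ]
    refine Finset.sum_congr rfl fun w _ => ?_
    rw [zmon_prod]
    congr 1
    funext k
    simp [esum, stv, Finset.sum_apply]
  have hpre : (∏ k, (zmon d (fun j => if j = k then 1 else 0) -
        zmon d (fun j => if j = k then -1 else 0))) =
      ∑ T : Finset (Fin d), ((-1 : ℚ) ^ ((Finset.univ \ T).card)) • zmon d (eps T) := by
    simp only [sub_eq_add_neg]
    rw [Finset.prod_add, Finset.powerset_univ]
    refine Finset.sum_congr rfl fun T _ => ?_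
    have hneg : ∏ k ∈ Finset.univ \ T, (-zmon d (fun j => if j = k then -1 else 0)) =
        ((-1 : ℚ) ^ ((Finset.univ \ T).card)) •
          ∏ k ∈ Finset.univ \ T, zmon d (fun j => if j = k then -1 else 0) := by
      induction (Finset.univ \ T) using Finset.induction with
      | empty => simp
      | insert _ _ h ih =>
        rw [Finset.prod_insert h, Finset.prod_insert h, ih, Finset.card_insert_of_notMem h]
        rw [pow_succ, mul_neg, mul_smul_comm]
        simp [neg_mul, smul_neg, neg_smul]
    rw [hneg, zmon_prod, zmon_prod, mul_smul_comm, ← zmon_add]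
    congr 2
    funext j
    simp only [Pi.add_apply, Finset.sum_apply, eps]
    rw [Finset.sum_ite_eq T j (fun _ => (1:ℤ)), Finset.sum_ite_eq (Finset.univ \ T) j
      (fun _ => (-1:ℤ))]
    by_cases hj : j ∈ T <;> simp [hj]
  rw [hchar, hpre, Finset.sum_mul_sum]
  rw [Fintype.sum_prod_type]
  refine Finset.sum_congr rfl fun T _ => Finset.sum_congr rfl fun w _ => ?_
  rw [smul_mul_assoc, ← zmon_add, term, ← smul_zmon]
  rfl

/-! ## Reflection involution -/

variable {S} {n}

/-- position of the pair-walk -/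
def ppos (p : Pair S n) (m : ℕ) (k : Fin d) : ℤ := wpos p.1 (stv S p.2) m k

def Bad (p : Pair S n) : Prop := ∃ m, ∃ k, ppos p m k = 0

def zset (p : Pair S n) (m : ℕ) : Finset (Fin d) :=
  Finset.univ.filter (fun k => ppos p m k = 0)

noncomputable def m0 (p : Pair S n) (hp : Bad p) : ℕ := Nat.find hp

lemma zset_nonempty (p : Pair S n) (hp : Bad p) : (zset p (m0 p hp)).Nonempty := by
  obtain ⟨k, hk⟩ := Nat.find_spec hp
  exact ⟨k, Finset.mem_filter.mpr ⟨Finset.mem_univ _, hk⟩⟩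

noncomputable def kk0 (p : Pair S n) (hp : Bad p) : Fin d :=
  (zset p (m0 p hp)).min' (zset_nonempty p hp)

lemma kk0_spec (p : Pair S n) (hp : Bad p) : ppos p (m0 p hp) (kk0 p hp) = 0 := by
  have := Finset.min'_mem (zset p (m0 p hp)) (zset_nonempty p hp)
  simpa [zset, kk0] using this

lemma m0_min (p : Pair S n) (hp : Bad p) {m : ℕ} (hm : m < m0 p hp) (k : Fin d) :
    ppos p m k ≠ 0 := by
  intro h
  exact Nat.find_min hp hm ⟨k, h⟩

lemma ppos_of_ge (p : Pair S n) {m : ℕ} (hm : n ≤ m) (k : Fin d) :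
    ppos p m k = ppos p n k := by
  unfold ppos wpos
  rw [psum_of_ge _ _ hm, psum_n]

lemma m0_le (p : Pair S n) (hp : Bad p) : m0 p hp ≤ n := by
  by_contra h
  obtain ⟨k, hk⟩ := Nat.find_spec hp
  have h2 : ppos p n k = 0 := by
    rw [← ppos_of_ge p (le_of_lt (not_le.mp h)) k]; exact hk
  exact m0_min p hp (not_le.mp h) k h2

def flip (T : Finset (Fin d)) (k : Fin d) : Finset (Fin d) :=
  if k ∈ T then T.erase k else insert k T

lemma eps_flip_self (T : Finset (Fin d)) (k : Fin d) : eps (flip T k) k = -eps T k := by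
  by_cases h : k ∈ T <;> simp [flip, eps, h]

lemma eps_flip_ne (T : Finset (Fin d)) (k j : Fin d) (hj : j ≠ k) :
    eps (flip T k) j = eps T j := by
  by_cases h : k ∈ T <;> simp [flip, eps, h, Finset.mem_erase, Finset.mem_insert, hj]

lemma flip_flip (T : Finset (Fin d)) (k : Fin d) : flip (flip T k) k = T := by
  ext j
  by_cases hj : j = k
  · subst hj
    by_cases h : j ∈ T
    · rw [show flip T j = T.erase j from if_pos h,
        show flip (T.erase j) j = insert j (T.erase j) from if_neg (Finset.notMem_erase j T)]
      simp [h]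
    · rw [show flip T j = insert j T from if_neg h,
        show flip (insert j T) j = (insert j T).erase j from
          if_pos (Finset.mem_insert_self j T)]
      simp [h]
  · by_cases h : k ∈ T <;> simp [flip, h, hj]

lemma flip_ne (T : Finset (Fin d)) (k : Fin d) : flip T k ≠ T := by
  by_cases h : k ∈ T
  · simp only [flip, if_pos h]
    intro he
    exact (Finset.notMem_erase k T) (he.symm ▸ h)
  · simp only [flip, if_neg h]
    intro he
    exact h (he ▸ Finset.mem_insert_self k T)

variable (hsym : ∀ s ∈ S, ∀ k, Function.update s k (-(s k)) ∈ S)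

def rstep (s : {s : Fin d → ℤ // s ∈ S}) (k : Fin d) : {s : Fin d → ℤ // s ∈ S} :=
  ⟨Function.update s.1 k (-(s.1 k)), hsym s.1 s.2 k⟩

noncomputable def reflB (p : Pair S n) (hp : Bad p) : Pair S n :=
  (flip p.1 (kk0 p hp),
    fun l => if (l : ℕ) < m0 p hp then rstep hsym (p.2 l) (kk0 p hp) else p.2 l)

section reflprops
variable (p : Pair S n) (hp : Bad p)

lemma stv_reflB_ne (l : Fin n) (k : Fin d) (hk : k ≠ kk0 p hp) :
    stv S (reflB hsym p hp).2 l k = stv S p.2 l k := by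
  simp only [stv, reflB]
  split
  · simp [rstep, Function.update_of_ne hk]
  · rfl

lemma stv_reflB_k0 (l : Fin n) :
    stv S (reflB hsym p hp).2 l (kk0 p hp) =
      if (l : ℕ) < m0 p hp then -stv S p.2 l (kk0 p hp) else stv S p.2 l (kk0 p hp) := by
  simp only [stv, reflB]
  split
  · simp [rstep]
  · rfl

lemma psum_reflB_ne (m : ℕ) (k : Fin d) (hk : k ≠ kk0 p hp) :
    psum (stv S (reflB hsym p hp).2) m k = psum (stv S p.2) m k :=
  Finset.sum_congr rfl fun l _ => stv_reflB_ne hsym p hp l k hk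

lemma psum_reflB_k0 (m : ℕ) :
    psum (stv S (reflB hsym p hp).2) m (kk0 p hp) =
      psum (stv S p.2) m (kk0 p hp) - 2 * psum (stv S p.2) (min m (m0 p hp)) (kk0 p hp) := by
  unfold psum
  have key : ∀ l ∈ Finset.univ.filter (fun l : Fin n => (l : ℕ) < m),
      stv S (reflB hsym p hp).2 l (kk0 p hp) =
        stv S p.2 l (kk0 p hp) -
          2 * (if (l : ℕ) < m0 p hp then stv S p.2 l (kk0 p hp) else 0) := by
    intro l _
    rw [stv_reflB_k0]
    split <;> ring
  rw [Finset.sum_congr rfl key, Finset.sum_sub_distrib, ← Finset.mul_sum]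
  congr 2
  rw [Finset.sum_filter, Finset.sum_filter]
  refine Finset.sum_congr rfl fun l _ => ?_
  simp only [lt_inf_iff]
  split_ifs <;> first | rfl | omega

lemma ppos_reflB_ne (m : ℕ) (k : Fin d) (hk : k ≠ kk0 p hp) :
    ppos (reflB hsym p hp) m k = ppos p m k := by
  unfold ppos wpos
  rw [psum_reflB_ne hsym p hp m k hk]
  simp only [reflB]
  rw [eps_flip_ne _ _ _ hk]

lemma ppos_reflB_k0_le {m : ℕ} (hm : m ≤ m0 p hp) :
    ppos (reflB hsym p hp) m (kk0 p hp) = -ppos p m (kk0 p hp) := by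
  unfold ppos wpos
  rw [psum_reflB_k0, min_eq_left hm]
  have : eps (reflB hsym p hp).1 (kk0 p hp) = -eps p.1 (kk0 p hp) := eps_flip_self _ _
  rw [this]
  ring

lemma ppos_reflB_k0_ge {m : ℕ} (hm : m0 p hp ≤ m) :
    ppos (reflB hsym p hp) m (kk0 p hp) = ppos p m (kk0 p hp) := by
  have hz : eps p.1 (kk0 p hp) + psum (stv S p.2) (m0 p hp) (kk0 p hp) = 0 := kk0_spec p hp
  unfold ppos wpos
  rw [psum_reflB_k0, min_eq_right hm]
  have : eps (reflB hsym p hp).1 (kk0 p hp) = -eps p.1 (kk0 p hp) := eps_flip_self _ _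
  rw [this]
  omega

lemma ppos_reflB_zero_iff (m : ℕ) (k : Fin d) :
    ppos (reflB hsym p hp) m k = 0 ↔ ppos p m k = 0 := by
  by_cases hk : k = kk0 p hp
  · subst hk
    rcases le_total m (m0 p hp) with hm | hm
    · rw [ppos_reflB_k0_le hsym p hp hm]; omega
    · rw [ppos_reflB_k0_ge hsym p hp hm]
  · rw [ppos_reflB_ne hsym p hp m k hk]

lemma bad_reflB : Bad (reflB hsym p hp) :=
  ⟨m0 p hp, kk0 p hp, (ppos_reflB_zero_iff hsym p hp _ _).mpr (kk0_spec p hp)⟩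

lemma m0_reflB : m0 (reflB hsym p hp) (bad_reflB hsym p hp) = m0 p hp := by
  unfold m0
  refine le_antisymm (Nat.find_mono fun m h => ?_) (Nat.find_mono fun m h => ?_)
  · obtain ⟨k, hk⟩ := h
    exact ⟨k, (ppos_reflB_zero_iff hsym p hp m k).mpr hk⟩
  · obtain ⟨k, hk⟩ := h
    exact ⟨k, (ppos_reflB_zero_iff hsym p hp m k).mp hk⟩

lemma zset_reflB : zset (reflB hsym p hp) (m0 p hp) = zset p (m0 p hp) := by
  ext k
  simp only [zset, Finset.mem_filter, Finset.mem_univ, true_and]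
  exact ppos_reflB_zero_iff hsym p hp _ _

lemma min'_congr {s t : Finset (Fin d)} (h : s = t) (hs : s.Nonempty) (ht : t.Nonempty) :
    s.min' hs = t.min' ht := by subst h; rfl

lemma kk0_reflB : kk0 (reflB hsym p hp) (bad_reflB hsym p hp) = kk0 p hp := by
  unfold kk0
  have hm := m0_reflB hsym p hp
  refine min'_congr ?_ _ _
  rw [hm]
  exact zset_reflB hsym p hp

lemma reflB_reflB : reflB hsym (reflB hsym p hp) (bad_reflB hsym p hp) = p := by
  set q := reflB hsym p hp with hq_def
  have hq : Bad q := bad_reflB hsym p hp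
  have hm : m0 q hq = m0 p hp := m0_reflB hsym p hp
  have hk : kk0 q hq = kk0 p hp := kk0_reflB hsym p hp
  have h1 : (reflB hsym q hq).1 = p.1 := by
    show flip q.1 (kk0 q hq) = p.1
    rw [hk]
    show flip (flip p.1 (kk0 p hp)) (kk0 p hp) = p.1
    exact flip_flip _ _
  have h2 : (reflB hsym q hq).2 = p.2 := by
    funext l
    show (if (l : ℕ) < m0 q hq then rstep hsym (q.2 l) (kk0 q hq) else q.2 l) = p.2 l
    rw [hm, hk]
    by_cases hl : (l : ℕ) < m0 p hp
    · rw [if_pos hl]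
      have hq2 : q.2 l = rstep hsym (p.2 l) (kk0 p hp) := if_pos hl
      rw [hq2]
      apply Subtype.ext
      simp [rstep, Function.update_idem, Function.update_self, neg_neg,
        Function.update_eq_self]
    · rw [if_neg hl]
      exact if_neg hl
  exact Prod.ext h1 h2

lemma reflB_ne : reflB hsym p hp ≠ p := by
  intro h
  have := congrArg Prod.fst h
  exact flip_ne p.1 (kk0 p hp) this

end reflprops
lemma sign_flip (T : Finset (Fin d)) (k : Fin d) :
    ((-1 : ℚ)) ^ ((Finset.univ \ flip T k).card) = -(-1 : ℚ) ^ ((Finset.univ \ T).card) := by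
  by_cases h : k ∈ T
  · have e : Finset.univ \ flip T k = insert k (Finset.univ \ T) := by
      ext j
      by_cases hj : j = k <;> simp [flip, if_pos h, hj, h]
    rw [e, Finset.card_insert_of_notMem (by simp [h]), pow_succ]
    ring
  · have e : Finset.univ \ T = insert k (Finset.univ \ flip T k) := by
      ext j
      by_cases hj : j = k <;> simp [flip, if_neg h, hj, h]
    rw [e, Finset.card_insert_of_notMem (by simp [flip, if_neg h]), pow_succ]
    ring

lemma endf_eq_ppos (p : Pair S n) (k : Fin d) : endf S n p k = ppos p n k := by
  unfold endf ppos wpos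
  rw [psum_n]

lemma endf_reflB (hsym : ∀ s ∈ S, ∀ k, Function.update s k (-(s k)) ∈ S)
    (p : Pair S n) (hp : Bad p) : endf S n (reflB hsym p hp) = endf S n p := by
  funext k
  rw [endf_eq_ppos, endf_eq_ppos]
  by_cases hk : k = kk0 p hp
  · subst hk
    exact ppos_reflB_k0_ge hsym p hp (m0_le p hp)
  · exact ppos_reflB_ne hsym p hp n k hk

lemma term_add_reflB (hsym : ∀ s ∈ S, ∀ k, Function.update s k (-(s k)) ∈ S)
    (p : Pair S n) (hp : Bad p) :
    term S n p + term S n (reflB hsym p hp) = 0 := by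
  unfold term
  rw [endf_reflB hsym p hp]
  rw [show (reflB hsym p hp).1 = flip p.1 (kk0 p hp) from rfl, sign_flip]
  rw [← AddMonoidAlgebra.single_add]
  simp

def EndOK (p : Pair S n) : Prop := ∀ k, 0 ≤ endf S n p k

lemma badsum (hsym : ∀ s ∈ S, ∀ k, Function.update s k (-(s k)) ∈ S) :
    ∑ p ∈ Finset.univ.filter (fun p : Pair S n => EndOK p ∧ Bad p), term S n p = 0 := by
  refine Finset.sum_involution
    (fun p hp => reflB hsym p (Finset.mem_filter.mp hp).2.2) ?_ ?_ ?_ ?_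
  · intro p hp
    exact term_add_reflB hsym p _
  · intro p hp _
    exact reflB_ne hsym p _
  · intro p hp
    have h := (Finset.mem_filter.mp hp).2
    refine Finset.mem_filter.mpr ⟨Finset.mem_univ _, ?_, bad_reflB hsym p h.2⟩
    intro k
    rw [endf_reflB hsym p h.2]
    exact h.1 k
  · intro p hp
    exact reflB_reflB hsym p _

/-- good walk predicate -/
def GW (w : Fin n → {s : Fin d → ℤ // s ∈ S}) : Prop :=
  ∀ m : ℕ, ∀ k, 0 ≤ psum (stv S w) m k

lemma ppos_step (hsteps : ∀ s ∈ S, (∀ k, s k = -1 ∨ s k = 0 ∨ s k = 1) ∧ s ≠ 0)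
    (p : Pair S n) (m : ℕ) (k : Fin d) :
    ppos p m k - 1 ≤ ppos p (m+1) k ∧ ppos p (m+1) k ≤ ppos p m k + 1 := by
  unfold ppos wpos
  rw [psum_succ]
  split
  · rename_i h
    rcases (hsteps _ (p.2 ⟨m, h⟩).2).1 k with h1 | h1 | h1 <;>
      rw [show stv S p.2 ⟨m, h⟩ k = (p.2 ⟨m, h⟩).1 k from rfl, h1] <;> omega
  · omega

lemma eps_univ (k : Fin d) : eps (Finset.univ : Finset (Fin d)) k = 1 := by
  simp [eps]

lemma good_char (hsteps : ∀ s ∈ S, (∀ k, s k = -1 ∨ s k = 0 ∨ s k = 1) ∧ s ≠ 0)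
    (p : Pair S n) :
    (EndOK p ∧ ¬ Bad p) ↔ (p.1 = Finset.univ ∧ GW p.2) := by
  constructor
  · rintro ⟨hE, hB⟩
    have hT : p.1 = Finset.univ := by
      rw [Finset.eq_univ_iff_forall]
      by_contra hT
      push_neg at hT
      obtain ⟨k, hk⟩ := hT
      have h0 : ppos p 0 k = -1 := by
        unfold ppos wpos
        rw [psum_zero]
        simp [eps, hk]
      have hn : (0:ℤ) ≤ ppos p n k := by
        rw [← endf_eq_ppos]
        exact hE k
      obtain ⟨m, -, hm⟩ := ivt_up (fun m => ppos p m k)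
        (fun m => (ppos_step hsteps p m k).2) n 0 (by show ppos p 0 k < (0:ℤ); omega) hn
      exact hB ⟨m, k, hm⟩
    refine ⟨hT, ?_⟩
    intro m k
    by_contra hneg
    push_neg at hneg
    have h0 : ppos p 0 k = 1 := by
      unfold ppos wpos
      rw [psum_zero, hT, eps_univ]
      ring
    have hm : ppos p m k ≤ 0 := by
      unfold ppos wpos
      rw [hT, eps_univ]
      omega
    obtain ⟨m', -, hm'⟩ := ivt_down (fun m => ppos p m k)
      (fun m => (ppos_step hsteps p m k).1) m 0 (by show (0:ℤ) < ppos p 0 k; omega) hm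
    exact hB ⟨m', k, hm'⟩
  · rintro ⟨hT, hG⟩
    constructor
    · intro k
      rw [endf_eq_ppos]
      unfold ppos wpos
      rw [hT, eps_univ, psum_n]
      have := hG n k
      rw [psum_n] at this
      omega
    · rintro ⟨m, k, hm⟩
      unfold ppos wpos at hm
      rw [hT, eps_univ] at hm
      have := hG m k
      omega

lemma goodsum (hsteps : ∀ s ∈ S, (∀ k, s k = -1 ∨ s k = 0 ∨ s k = 1) ∧ s ≠ 0) :
    ∑ p ∈ Finset.univ.filter (fun p : Pair S n => EndOK p ∧ ¬ Bad p), term S n p =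
      ∑ w ∈ Finset.univ.filter (fun w : Fin n → {s : Fin d → ℤ // s ∈ S} => GW w),
        zmon d (fun k => 1 + esum (stv S w) k) := by
  refine Finset.sum_nbij' (fun p => p.2) (fun w => (Finset.univ, w)) ?_ ?_ ?_ ?_ ?_
  · intro p hp
    have h := (good_char hsteps p).mp (Finset.mem_filter.mp hp).2
    exact Finset.mem_filter.mpr ⟨Finset.mem_univ _, h.2⟩
  · intro w hw
    have h := (good_char hsteps ((Finset.univ, w) : Pair S n)).mpr
      ⟨rfl, (Finset.mem_filter.mp hw).2⟩
    exact Finset.mem_filter.mpr ⟨Finset.mem_univ _, h⟩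
  · intro p hp
    have h := (good_char hsteps p).mp (Finset.mem_filter.mp hp).2
    exact Prod.ext h.1.symm rfl
  · intro w hw
    rfl
  · intro p hp
    have hT := ((good_char hsteps p).mp (Finset.mem_filter.mp hp).2).1
    have he : endf S n p = fun k => 1 + esum (stv S p.2) k := by
      funext k
      unfold endf
      rw [hT, eps_univ]
    unfold term
    rw [he, hT]
    simp [zmon, Finset.sdiff_self]

lemma key_identity (hsym : ∀ s ∈ S, ∀ k, Function.update s k (-(s k)) ∈ S)
    (hsteps : ∀ s ∈ S, (∀ k, s k = -1 ∨ s k = 0 ∨ s k = 1) ∧ s ≠ 0) :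
    posPart d ((∏ k, (zmon d (fun j => if j = k then 1 else 0) -
        zmon d (fun j => if j = k then -1 else 0))) * charL d S ^ n) =
      ∑ w ∈ Finset.univ.filter (fun w : Fin n → {s : Fin d → ℤ // s ∈ S} => GW w),
        zmon d (fun k => 1 + esum (stv S w) k) := by
  rw [expand S n, posPart_sum]
  have h1 : ∀ p : Pair S n, posPart d (term S n p) = if EndOK p then term S n p else 0 := by
    intro p
    unfold term
    rw [posPart_single]
    refine if_congr ?_ rfl rfl
    constructor
    · intro h k
      have := h k
      rwa [Finsupp.coe_equivFunOnFinite_symm] at this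
    · intro h k
      rw [Finsupp.coe_equivFunOnFinite_symm]
      exact h k
  rw [Finset.sum_congr rfl (fun p _ => h1 p), ← Finset.sum_filter]
  rw [← Finset.sum_filter_add_sum_filter_not (Finset.univ.filter (fun p : Pair S n => EndOK p))
    (fun p => Bad p) (term S n)]
  rw [Finset.filter_filter, Finset.filter_filter]
  rw [badsum hsym, zero_add, goodsum hsteps]

lemma esum_bounds (hsteps : ∀ s ∈ S, (∀ k, s k = -1 ∨ s k = 0 ∨ s k = 1) ∧ s ≠ 0)
    (w : Fin n → {s : Fin d → ℤ // s ∈ S}) (hw : GW w) (k : Fin d) :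
    0 ≤ esum (stv S w) k ∧ esum (stv S w) k ≤ n := by
  constructor
  · have := hw n k
    rwa [psum_n] at this
  · unfold esum
    calc ∑ m, stv S w m k ≤ ∑ _m : Fin n, (1 : ℤ) := by
          refine Finset.sum_le_sum fun m _ => ?_
          rcases (hsteps _ (w m).2).1 k with h | h | h <;>
            rw [show stv S w m k = (w m).1 k from rfl, h] <;> omega
      _ = n := by simp

noncomputable def endmap (w : Fin n → {s : Fin d → ℤ // s ∈ S}) : Fin d → Fin (n+1) :=
  fun k => ⟨min (esum (stv S w) k).toNat n, by omega⟩

lemma fiber_eq (hsteps : ∀ s ∈ S, (∀ k, s k = -1 ∨ s k = 0 ∨ s k = 1) ∧ s ≠ 0)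
    (i : Fin d → Fin (n+1)) :
    (Finset.univ.filter (fun w : Fin n → {s : Fin d → ℤ // s ∈ S} => GW w)).filter
        (fun w => endmap w = i) =
      Finset.univ.filter (fun w : Fin n → {s : Fin d → ℤ // s ∈ S} =>
        GW w ∧ ∀ k, esum (stv S w) k = ((i k : ℕ) : ℤ)) := by
  rw [Finset.filter_filter]
  ext w
  simp only [Finset.mem_filter, Finset.mem_univ, true_and]
  refine and_congr_right fun hw => ?_
  have hik : ∀ k : Fin d, (i k : ℕ) ≤ n := fun k => Nat.lt_succ_iff.mp (i k).isLt
  constructor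
  · intro h k
    have h2 : (endmap w k : ℕ) = (i k : ℕ) := by rw [congrFun h k]
    have h3 : min (esum (stv S w) k).toNat n = (i k : ℕ) := h2
    have hb := esum_bounds hsteps w hw k
    have := hik k
    omega
  · intro h
    funext k
    apply Fin.ext
    show min (esum (stv S w) k).toNat n = (i k : ℕ)
    have hb := esum_bounds hsteps w hw k
    have := hik k
    have := h k
    omega

lemma count_eq (i : Fin d → Fin (n+1)) :
    WalkCount d S n (fun j => ((i j : ℕ) : ℤ)) =
      (Finset.univ.filter (fun w : Fin n → {s : Fin d → ℤ // s ∈ S} =>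
        GW w ∧ ∀ k, esum (stv S w) k = ((i k : ℕ) : ℤ))).card := by
  rw [WalkCount]
  have eqv : {w : Fin n → (Fin d → ℤ) //
      (∀ m, w m ∈ S) ∧
      (∀ m : ℕ, ∀ k, 0 ≤ ∑ l ∈ Finset.univ.filter (fun l : Fin n => (l : ℕ) < m), w l k) ∧
      (∀ k, ∑ m, w m k = ((i k : ℕ) : ℤ))} ≃
    {w : Fin n → {s : Fin d → ℤ // s ∈ S} //
      GW w ∧ ∀ k, esum (stv S w) k = ((i k : ℕ) : ℤ)} := by
    refine ⟨fun w => ⟨fun m => ⟨w.1 m, w.2.1 m⟩, w.2.2.1, w.2.2.2⟩,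
      fun w => ⟨fun m => (w.1 m).1, fun m => (w.1 m).2, w.2.1, w.2.2⟩, ?_, ?_⟩
    · intro w
      rfl
    · intro w
      rfl
  rw [Nat.card_congr eqv, Nat.card_eq_fintype_card, Fintype.card_subtype]

lemma rhs_eq (hsteps : ∀ s ∈ S, (∀ k, s k = -1 ∨ s k = 0 ∨ s k = 1) ∧ s ≠ 0) :
    ∑ w ∈ Finset.univ.filter (fun w : Fin n → {s : Fin d → ℤ // s ∈ S} => GW w),
        zmon d (fun k => 1 + esum (stv S w) k) =
      ∑ i : Fin d → Fin (n+1),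
        ((WalkCount d S n fun j => ((i j : ℕ) : ℤ)) : ℚ) •
          zmon d (fun j => 1 + ((i j : ℕ) : ℤ)) := by
  rw [← Finset.sum_fiberwise_of_maps_to (g := endmap) (t := Finset.univ)
    (fun w _ => Finset.mem_univ _)]
  refine Finset.sum_congr rfl fun i _ => ?_
  rw [fiber_eq hsteps i]
  have hconst : ∀ w ∈ Finset.univ.filter (fun w : Fin n → {s : Fin d → ℤ // s ∈ S} =>
      GW w ∧ ∀ k, esum (stv S w) k = ((i k : ℕ) : ℤ)),
      zmon d (fun k => 1 + esum (stv S w) k) = zmon d (fun j => 1 + ((i j : ℕ) : ℤ)) := by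
    intro w hw
    have h := (Finset.mem_filter.mp hw).2.2
    congr 1
    funext k
    rw [h k]
  rw [Finset.sum_congr rfl hconst, Finset.sum_const, count_eq, Nat.cast_smul_eq_nsmul]

end OS

/-- Positive-part extraction of the orbit sum recovers the generating function:
`[z₁^{≥0}]⋯[z_d^{≥0}] ((z₁-z₁⁻¹)⋯(z_d-z_d⁻¹)/(1-tS(z))) = (z₁⋯z_d)·F(z,t)`,
coefficientwise in `t`, where `1/(1-tS(z)) = ∑_n S(z)^n t^n`. -/
theorem posPart_orbit_sum_eq_walkGF (d : ℕ) (S : Finset (Fin d → ℤ))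
    (hsteps : ∀ s ∈ S, (∀ k, s k = -1 ∨ s k = 0 ∨ s k = 1) ∧ s ≠ 0)
    (hsym : ∀ s ∈ S, ∀ k, Function.update s k (-(s k)) ∈ S)
    (hfwd : ∀ k, ∃ s ∈ S, s k = 1) :
    ∀ n, posPart d (PowerSeries.coeff n
        (PowerSeries.C (∏ k, (zmon d (fun j => if j = k then 1 else 0) -
            zmon d (fun j => if j = k then -1 else 0))) *
          PowerSeries.mk (fun m => charL d S ^ m))) =
      PowerSeries.coeff n (PowerSeries.C (zmon d fun _ => 1) * walkGF d S) := by
  intro n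
  rw [PowerSeries.coeff_C_mul, PowerSeries.coeff_mk]
  rw [PowerSeries.coeff_C_mul, walkGF, PowerSeries.coeff_mk]
  rw [OS.key_identity hsym hsteps, OS.rhs_eq hsteps]
  rw [Finset.mul_sum]
  refine Finset.sum_congr rfl fun i _ => ?_
  rw [mul_smul_comm, ← OS.zmon_add]
  congr 1
end
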